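/- arXiv:1312.0687 — 6 statements merged into one kernel-verified Lean document; each statement's English description precedes it below -/
import Mathlib

section
/- Every rational point P of the elliptic curve E : y² = x³ − 1 over the finite field F₂₅ with 25 elements satisfies 6 • P = O; that is, E(F₂₅) is contained in the kernel of multiplication by 5 + 1 = 6. -/
/-!
Every rational point `P` of the elliptic curve `E : y² = x³ − 1` over the finite field
`F₂₅` with 25 elements satisfies `6 • P = O`; that is, `E(F₂₅)` is contained in the
kernel of multiplication by `5 + 1 = 6`.
-/

instance : Fact (Nat.Prime 5) := ⟨by norm_num⟩

/-- The finite field with 25 elements. -/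
abbrev F25 : Type := GaloisField 5 2

/-- The elliptic curve `y² = x³ − 1` (in affine Weierstrass form) over `F₂₅`. -/
noncomputable def E : WeierstrassCurve.Affine F25 :=
  { a₁ := 0, a₂ := 0, a₃ := 0, a₄ := 0, a₆ := -1 }

lemma F25_five : (5 : F25) = 0 := by
  exact_mod_cast CharP.cast_eq_zero F25 5

lemma F25_two_ne : (2 : F25) ≠ 0 := by
  intro h
  have h5 := F25_five
  have : (1 : F25) = 0 := by linear_combination 3 * h - h5
  exact one_ne_zero this

lemma F25_pow_card (x : F25) : x ^ 25 = x := by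
  have : Fintype F25 := Fintype.ofFinite F25
  have h := FiniteField.pow_card x
  have hc : Fintype.card F25 = 25 := by
    rw [← Nat.card_eq_fintype_card]
    simpa using GaloisField.card 5 2 (by norm_num)
  rwa [hc] at h

/-- Key polynomial identity: the `x`-coordinate condition making `2P` a `3`-torsion point. -/
lemma key_identity (x y : F25) (hy2 : y ^ 2 = x ^ 3 - 1) (hy : y ≠ 0) :
    (x ^ 4 + 8 * x) * ((x ^ 4 + 8 * x) ^ 3 + 64 * (x ^ 3 - 1) ^ 3) = 0 := by
  have hx25 := F25_pow_card x
  have h5 := F25_five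
  have hy24 : y ^ 24 = 1 := by
    have h := F25_pow_card y
    have h0 : y * (y ^ 24 - 1) = 0 := by linear_combination h
    rcases mul_eq_zero.mp h0 with h' | h'
    · exact absurd h' hy
    · exact sub_eq_zero.mp h'
  have hf : (x ^ 3 - 1) ^ 12 = 1 := by
    calc (x ^ 3 - 1) ^ 12 = (y ^ 2) ^ 12 := by rw [hy2]
    _ = y ^ 24 := by ring
    _ = 1 := hy24
  linear_combination
    ((1)*x^7 + (3)*x^4) * hf
    + ((4)*x^18 + (4)*x^15 + (2)*x^9 + (2)*x^3 + (2)) * hx25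
    + ((-1)*x^43 + (1)*x^40 + (-6)*x^37 + (4)*x^34 + (33)*x^31 + (-139)*x^28 + (290)*x^25
      + (-396)*x^22 + (377)*x^19 + (-252)*x^16 + (138)*x^13 + (104)*x^10 + (148)*x^7
      + (1114)*x^4 + (-102)*x) * h5

open WeierstrassCurve.Affine WeierstrassCurve.Affine.Point in
open Classical in
theorem six_smul_eq_zero_of_E_over_F25 (P : E.Point) : (5 + 1) • P = 0 := by
  have h5 := F25_five
  have h2 : (2 : F25) ≠ 0 := F25_two_ne
  cases P with
  | zero => rw [← WeierstrassCurve.Affine.Point.zero_def]; exact smul_zero _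
  | @some x y h =>
    have heq : y ^ 2 = x ^ 3 - 1 := by
      have hh := (E.equation_iff x y).mp h.1
      simp only [E] at hh
      linear_combination hh
    have hneg : E.negY x y = -y := by simp [negY, E]
    by_cases hy : y = 0
    · have hPP : Point.some _ _ h + Point.some _ _ h = 0 := add_self_of_Y_eq (by rw [hneg, hy, _root_.neg_zero])
      have habel : (5 + 1) • (Point.some _ _ h : E.Point)
          = (Point.some _ _ h + Point.some _ _ h) + (Point.some _ _ h + Point.some _ _ h) + (Point.some _ _ h + Point.some _ _ h) := by abel
      rw [habel, hPP]; simp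
    · have hyne : y ≠ E.negY x y := by
        rw [hneg]
        intro hc
        exact hy (by
          have h2y : 2 * y = 0 := by linear_combination hc
          exact (mul_eq_zero.mp h2y).resolve_left h2)
      set L := E.slope x x y y with hL
      have hQ : E.Nonsingular (E.addX x x L) (E.addY x x y L) :=
        nonsingular_add h h fun hxy => hyne hxy.right
      have hPP : Point.some _ _ h + Point.some _ _ h = Point.some _ _ hQ := add_self_of_Y_ne hyne
      set a := E.addX x x L with haDef
      set b := E.addY x x y L with hbDef
      have h2y : (2 * y) ≠ 0 := mul_ne_zero h2 hy
      have hslope : L = 3 * x ^ 2 / (2 * y) := by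
        rw [hL, slope_of_Y_ne rfl hyne, hneg]
        simp only [E]
        congr 1 <;> ring
      have ha : a = L ^ 2 - 2 * x := by
        simp only [haDef, addX, E]; ring
      have hsl2 : L * (2 * y) = 3 * x ^ 2 := by
        rw [hslope]; field_simp
      have hstep1 : a * (2 * y) ^ 2 = 9 * x ^ 4 - 8 * x * y ^ 2 := by
        rw [ha]; linear_combination (L * (2 * y) + 3 * x ^ 2) * hsl2
      have hkey := key_identity x y heq hy
      have ha3 : a * (a ^ 3 + 1) = 0 := by
        have e2 : a * (a ^ 3 + 1) * (2 * y) ^ 8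
            = (a * (2 * y) ^ 2) * ((a * (2 * y) ^ 2) ^ 3 + ((2 * y) ^ 2) ^ 3) := by ring
        rw [hstep1] at e2
        have e3 : a * (a ^ 3 + 1) * (2 * y) ^ 8 = 0 := by
          rw [e2]
          linear_combination hkey
            + ((-8*x) * ((9*x^4-8*x*y^2)^3 + 64*y^6
                + (x^4+8*x) * ((9*x^4-8*x*y^2)^2 + (9*x^4-8*x*y^2)*(x^4+8*x) + (x^4+8*x)^2)))
              * heq
            + (64 * (x^4+8*x) * (y^4 + y^2*(x^3-1) + (x^3-1)^2)) * heq
        have hpow : ((2 * y) ^ 8) ≠ 0 := pow_ne_zero _ h2y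
        exact (mul_eq_zero.mp e3).resolve_right hpow
      have hb2 : b ^ 2 = a ^ 3 - 1 := by
        have hh := (E.equation_iff a b).mp hQ.1
        simp only [E] at hh
        linear_combination hh
      have hbne : b ≠ 0 := by
        intro h0
        rw [h0] at hb2
        have ha1 : a ^ 3 = 1 := by linear_combination -hb2
        have h2a : 2 * a = 0 := by linear_combination ha3 + (-a) * ha1
        have ha0 : a = 0 := (mul_eq_zero.mp h2a).resolve_left h2
        rw [ha0] at ha1
        simp at ha1
      have hnegQ : E.negY a b = -b := by simp [negY, E]
      have hbneg : b ≠ E.negY a b := by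
        rw [hnegQ]
        intro hc
        exact hbne (by
          have h2b : 2 * b = 0 := by linear_combination hc
          exact (mul_eq_zero.mp h2b).resolve_left h2)
      set L' := E.slope a a b b with hL'
      have hQQ : Point.some _ _ hQ + Point.some _ _ hQ = Point.some _ _ (nonsingular_add hQ hQ fun hxy => hbneg hxy.right) :=
        add_self_of_Y_ne hbneg
      have hsl' : L' = 3 * a ^ 2 / (2 * b) := by
        rw [hL', slope_of_Y_ne rfl hbneg, hnegQ]
        simp only [E]
        congr 1 <;> ring
      have h2b : (2 * b) ≠ 0 := mul_ne_zero h2 hbne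
      have hsl'2 : L' * (2 * b) = 3 * a ^ 2 := by
        rw [hsl']; field_simp
      have hL2 : L' ^ 2 * (4 * b ^ 2) = 3 * a * (4 * b ^ 2) := by
        linear_combination (L' * (2 * b) + 3 * a ^ 2) * hsl'2 + (-3) * ha3 + (-12 * a) * hb2
          + (3 * a) * h5
      have hL2' : L' ^ 2 = 3 * a := by
        have h4b : (4 : F25) * b ^ 2 ≠ 0 := by
          intro hc
          rcases mul_eq_zero.mp hc with hc | hc
          · exact F25_two_ne (by
              have : (2:F25) * 2 = 0 := by linear_combination hc
              rcases mul_eq_zero.mp this with h' | h' <;> exact h')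
          · exact hbne (pow_eq_zero_iff (by norm_num) |>.mp hc)
        exact mul_right_cancel₀ h4b hL2
      have ha' : E.addX a a L' = a := by
        simp only [addX, E]
        linear_combination hL2'
      have hb' : E.addY a a b L' = E.negY a b := by
        rw [addY, negAddY, ha', sub_self, mul_zero, zero_add]
      have hQneg : Point.some _ _ (nonsingular_add hQ hQ fun hxy => hbneg hxy.right) = -Point.some _ _ hQ := by
        rw [neg_some]
        simp only [Point.some.injEq]
        exact ⟨ha', hb'⟩
      have h3Q : Point.some _ _ hQ + Point.some _ _ hQ + Point.some _ _ hQ = 0 := by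
        rw [hQQ, hQneg]
        exact neg_add_cancel _
      have habel : (5 + 1) • (Point.some _ _ h : E.Point)
          = (Point.some _ _ h + Point.some _ _ h) + (Point.some _ _ h + Point.some _ _ h) + (Point.some _ _ h + Point.some _ _ h) := by abel
      rw [habel, hPP]
      exact h3Q
end

section
/- Let k be a field of characteristic 5 and let s ∈ k satisfy s² = 2. If x, y ∈ k satisfy y² = x³ − 1 and x ≠ 1, then the elements u = (2x² + 3x + 1)/(x − 1) and v = 2·s·y·(x² + 3x + 3)/(x − 1)² satisfy v² = u³ − 1. (Thus these formulas define a degree-2 isogeny φ_{E,2} from the curve y² = x³ − 1 to itself.) -/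
/-!
Let `k` be a field of characteristic 5 and let `s ∈ k` satisfy `s² = 2`.  If `x, y ∈ k`
satisfy `y² = x³ − 1` and `x ≠ 1`, then the elements `u = (2x² + 3x + 1)/(x − 1)` and
`v = 2·s·y·(x² + 3x + 3)/(x − 1)²` satisfy `v² = u³ − 1`.  (Thus these formulas define a
degree-2 isogeny `φ_{E,2}` of the curve `y² = x³ − 1` to itself.)
-/

theorem phi_E2_maps_curve_to_curve {k : Type*} [Field k] [CharP k 5]
    (s : k) (hs : s ^ 2 = 2) (x y : k) (hxy : y ^ 2 = x ^ 3 - 1) (hx : x ≠ 1) :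
    (2 * s * y * (x ^ 2 + 3 * x + 3) / (x - 1) ^ 2) ^ 2 =
      ((2 * x ^ 2 + 3 * x + 1) / (x - 1)) ^ 3 - 1 := by
  have h5 : (5 : k) = 0 := by exact_mod_cast CharP.cast_eq_zero k 5
  have hx1 : x - 1 ≠ 0 := sub_ne_zero.mpr hx
  field_simp
  ring_nf
  linear_combination y^2*(36 + 72*x + 60*x^2 + 24*x^3 + 4*x^4)*hs + 2*(36 + 72*x + 60*x^2 + 24*x^3 + 4*x^4)*hxy + (-14 - 28*x - 18*x^2 + 10*x^3 + 28*x^4 + 18*x^5 + 4*x^6)*h5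
end

section
/- Let K be a field of characteristic 5 and let a, b, c ∈ K satisfy a²⁵ = a, b²⁵ = b, c²⁵ = c (i.e. a, b, c lie in the subfield F₂₅), (a, b, c) ≠ (0, 0, 0), and a⁶ + b⁶ + c⁶ = 0. If x, y, z ∈ K satisfy x⁶ + y⁶ + z⁶ = 0 and a⁵x + b⁵y + c⁵z = 0 with (x, y, z) ≠ (0, 0, 0), then (x, y, z) is proportional to (a, b, c): there exists λ ∈ K with x = λa, y = λb, z = λc. (The tangent line to the Fermat sextic at an F₂₅-rational point meets the curve only at the point of tangency.) -/
private lemma fermat_tangent_aux {K : Type*} [Field K] [CharP K 5]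
    (a b c : K) (ha : a ^ 25 = a) (hb : b ^ 25 = b) (hc : c ^ 25 = c)
    (hc0 : c ≠ 0) (hF : a ^ 6 + b ^ 6 + c ^ 6 = 0)
    (x y z : K) (hFx : x ^ 6 + y ^ 6 + z ^ 6 = 0)
    (hT : a ^ 5 * x + b ^ 5 * y + c ^ 5 * z = 0) :
    ∃ l : K, x = l * a ∧ y = l * b ∧ z = l * c := by
  haveI : Fact (Nat.Prime 5) := ⟨by norm_num⟩
  have hS : (a ^ 5 * x + b ^ 5 * y) ^ 5 = a * x ^ 5 + b * y ^ 5 := by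
    rw [add_pow_char (p := 5)]
    linear_combination x ^ 5 * ha + y ^ 5 * hb
  have hcz : c ^ 5 * z = -(a ^ 5 * x + b ^ 5 * y) := by linear_combination hT
  have hz6 : c ^ 6 * z ^ 6 = (a * x ^ 5 + b * y ^ 5) * (a ^ 5 * x + b ^ 5 * y) := by
    calc c ^ 6 * z ^ 6 = (c ^ 5 * z) ^ 5 * (c ^ 5 * z) := by
          linear_combination (-(c ^ 5 * z ^ 6)) * hc
      _ = (-(a ^ 5 * x + b ^ 5 * y)) ^ 5 * (-(a ^ 5 * x + b ^ 5 * y)) := by rw [hcz]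
      _ = (a ^ 5 * x + b ^ 5 * y) ^ 5 * (a ^ 5 * x + b ^ 5 * y) := by ring
      _ = (a * x ^ 5 + b * y ^ 5) * (a ^ 5 * x + b ^ 5 * y) := by rw [hS]
  have hsub : (a * y - b * x) ^ 5 = a ^ 5 * y ^ 5 - b ^ 5 * x ^ 5 := by
    rw [sub_pow_char (p := 5)]; ring
  have key : (a * y - b * x) ^ 6 = 0 := by
    linear_combination (a * y - b * x) * hsub - c ^ 6 * hFx + hz6 + (x ^ 6 + y ^ 6) * hF
  have hayx : a * y = b * x := by
    have h0 := pow_eq_zero_iff (n := 6) (by norm_num) |>.mp key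
    linear_combination h0
  by_cases ha0 : a = 0
  · have hb0 : b ≠ 0 := by
      intro hb0
      apply hc0
      have : c ^ 6 = 0 := by rw [ha0, hb0] at hF; linear_combination hF
      exact pow_eq_zero_iff (n := 6) (by norm_num) |>.mp this
    refine ⟨y / b, ?_, ?_, ?_⟩
    · rw [ha0]; field_simp
      have : b * x = 0 := by rw [← hayx, ha0]; ring
      rcases mul_eq_zero.mp this with h | h
      · exact absurd h hb0
      · rw [h]; ring
    · field_simp
    · have hb6 : b ^ 6 = -c ^ 6 := by rw [ha0] at hF; linear_combination hF
      field_simp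
      have h5 : c ^ 5 * (z * b) = c ^ 5 * (y * c) := by
        rw [ha0] at hT
        linear_combination b * hT - y * hb6
      have := mul_left_cancel₀ (pow_ne_zero 5 hc0) h5
      linear_combination this
  · refine ⟨x / a, ?_, ?_, ?_⟩
    · field_simp
    · field_simp
      linear_combination hayx
    · have h5 : c ^ 5 * (z * a) = c ^ 5 * (x * c) := by
        linear_combination a * hT - x * hF - b ^ 5 * hayx
      have := mul_left_cancel₀ (pow_ne_zero 5 hc0) h5
      field_simp
      linear_combination this

theorem tangent_line_meets_fermat_sextic_only_at_tangency {K : Type*} [Field K]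
    [CharP K 5] (a b c : K) (ha : a ^ 25 = a) (hb : b ^ 25 = b) (hc : c ^ 25 = c)
    (habc : (a, b, c) ≠ (0, 0, 0)) (hF : a ^ 6 + b ^ 6 + c ^ 6 = 0)
    (x y z : K) (hxyz : (x, y, z) ≠ (0, 0, 0)) (hFx : x ^ 6 + y ^ 6 + z ^ 6 = 0)
    (hT : a ^ 5 * x + b ^ 5 * y + c ^ 5 * z = 0) :
    ∃ l : K, x = l * a ∧ y = l * b ∧ z = l * c := by
  by_cases hcc : c ≠ 0
  · exact fermat_tangent_aux a b c ha hb hc hcc hF x y z hFx hT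
  push_neg at hcc
  by_cases hbb : b ≠ 0
  · obtain ⟨l, h1, h2, h3⟩ := fermat_tangent_aux c a b hc ha hb hbb
      (by linear_combination hF) z x y (by linear_combination hFx)
      (by linear_combination hT)
    exact ⟨l, h2, h3, h1⟩
  push_neg at hbb
  have haa : a ≠ 0 := by
    intro haa
    exact habc (by rw [haa, hbb, hcc])
  obtain ⟨l, h1, h2, h3⟩ := fermat_tangent_aux b c a hb hc ha haa
    (by linear_combination hF) y z x (by linear_combination hFx)
    (by linear_combination hT)
  exact ⟨l, h3, h1, h2⟩
end

section
/- Let k be a field of characteristic 5. If u, v ∈ k satisfy v² = u⁶ − 1 and u³ ≠ 1, then (v·(2u³ + 1)/(u³ − 1)²)² = (2u/(u³ − 1))³ − 1. (Thus the formulas (u, v) ↦ (2u/(u³ − 1), v·(2u³ + 1)/(u³ − 1)²) define a degree-3 morphism φ_{F,3} from the genus-2 hyperelliptic curve F : v² = u⁶ − 1 to the elliptic curve E : y² = x³ − 1.) -/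
/-!
Let `k` be a field of characteristic 5.  If `u, v ∈ k` satisfy `v² = u⁶ − 1` and
`u³ ≠ 1`, then `(v·(2u³ + 1)/(u³ − 1)²)² = (2u/(u³ − 1))³ − 1`.  (Thus the formulas
`(u, v) ↦ (2u/(u³ − 1), v·(2u³ + 1)/(u³ − 1)²)` define a degree-3 morphism `φ_{F,3}`
from the genus-2 hyperelliptic curve `F : v² = u⁶ − 1` to the elliptic curve
`E : y² = x³ − 1`.)
-/

theorem phi_F3_maps_F_to_E {k : Type*} [Field k] [CharP k 5]
    (u v : k) (huv : v ^ 2 = u ^ 6 - 1) (hu : u ^ 3 ≠ 1) :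
    (v * (2 * u ^ 3 + 1) / (u ^ 3 - 1) ^ 2) ^ 2 =
      (2 * u / (u ^ 3 - 1)) ^ 3 - 1 := by
  have hd : u ^ 3 - 1 ≠ 0 := sub_ne_zero.mpr hu
  have h5 : (5 : k) = 0 := CharP.cast_eq_zero k 5
  field_simp
  linear_combination ((2 * u ^ 3 + 1) ^ 2 * (u ^ 3 - 1) + (2 * u ^ 3 + 5 * u ^ 6 -
      3 * u ^ 9 - 8 * u ^ 12 + 4 * u ^ 15)) * huv +
    (u ^ 9 + u ^ 6 - u ^ 3 - 1 + (1 + u ^ 3 - 4 * u ^ 9 + 2 * u ^ 12 + 2 * u ^ 15 -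
      3 * u ^ 18 + u ^ 21)) * h5 +
    (2 + 5 * u ^ 3 - u ^ 6 - u ^ 9 + 8 * u ^ 12 - 4 * u ^ 15) * huv +
    (-2 * u ^ 6 + 3 * u ^ 9 - u ^ 12 - 2 * u ^ 15 + 3 * u ^ 18 - u ^ 21) * h5
end

section
/- Let k be a field of characteristic 5 and let s ∈ k satisfy s² = 2. If u, v ∈ k satisfy v² = u⁶ − 1 and u + 2s ≠ 0, then setting u′ = (2s·u + 4)/(u + 2s) and v′ = v/(u + 2s)³ one has v′² = u′⁶ − 1. (Thus the formulas define an automorphism h_F of the hyperelliptic curve F : v² = u⁶ − 1.) -/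
/-!
Let `k` be a field of characteristic 5 and let `s ∈ k` satisfy `s² = 2`.  If
`u, v ∈ k` satisfy `v² = u⁶ − 1` and `u + 2s ≠ 0`, then setting
`u′ = (2s·u + 4)/(u + 2s)` and `v′ = v/(u + 2s)³` one has `v′² = u′⁶ − 1`.  (Thus the
formulas define an automorphism `h_F` of the hyperelliptic curve `F : v² = u⁶ − 1`.)
-/

theorem hF_maps_F_to_F {k : Type*} [Field k] [CharP k 5]
    (s : k) (hs : s ^ 2 = 2) (u v : k) (huv : v ^ 2 = u ^ 6 - 1)
    (hu : u + 2 * s ≠ 0) :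
    (v / (u + 2 * s) ^ 3) ^ 2 = ((2 * s * u + 4) / (u + 2 * s)) ^ 6 - 1 := by
  have h5 : (5 : k) = 0 := by exact_mod_cast CharP.cast_eq_zero k 5
  have key : (2 * s * u + 4) ^ 6 - (u + 2 * s) ^ 6 = u ^ 6 - 1 := by
    linear_combination ((- 256 : k) + (14880 : k) * u^2 + (7620 : k) * u^4 + (256 : k) * u^6 - (384 : k) * s^1 * u^1 + (10080 : k) * s^1 * u^3 + (1536 : k) * s^1 * u^5 - (128 : k) * s^2 - (240 : k) * s^2 * u^2 + (3840 : k) * s^2 * u^4 + (128 : k) * s^2 * u^6 - (192 : k) * s^3 * u^1 + (768 : k) * s^3 * u^5 - (64 : k) * s^4 + (64 : k) * s^4 * u^6) * hs + ((717 : k) + (5952 : k) * u^2 + (3048 : k) * u^4 + (102 : k) * u^6 + (2304 : k) * s^1 * u^1 + (4032 : k) * s^1 * u^3 + (612 : k) * s^1 * u^5) * h5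
  rw [div_pow, div_pow, div_sub_one (pow_ne_zero 6 hu), key, huv, ← pow_mul]
end

section
/- Let M be the 4 × 4 integer matrix with rows (−2, −1, 0, 1), (−1, −2, −1, 0), (0, −1, −4, −2), (1, 0, −2, −4). Then the set of 4 × 4 integer matrices U satisfying U · M · Uᵀ = M has exactly 72 elements. (That is, the orthogonal group of the even negative-definite lattice R of rank 4 and discriminant 25 with Gram matrix M has order 72.) -/
/-!
Let `M` be the 4 × 4 integer matrix with rows `(−2, −1, 0, 1)`, `(−1, −2, −1, 0)`,
`(0, −1, −4, −2)`, `(1, 0, −2, −4)`.  Then the set of 4 × 4 integer matrices `U`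
satisfying `U · M · Uᵀ = M` has exactly 72 elements.  (That is, the orthogonal group
of the even negative-definite lattice `R` of rank 4 and discriminant 25 with Gram
matrix `M` has order 72.)
-/

open Matrix

/-- The Gram matrix of the even negative-definite lattice `R` of rank 4 with
discriminant 25. -/
def M : Matrix (Fin 4) (Fin 4) ℤ :=
  !![-2, -1, 0, 1;
     -1, -2, -1, 0;
     0, -1, -4, -2;
     1, 0, -2, -4]

abbrev T4 : Type := ℤ × ℤ × ℤ × ℤ

/-- The bilinear form of `M` on 4-tuples. -/
def B (u v : T4) : ℤ :=
  -2*u.1*v.1 - u.1*v.2.1 - u.2.1*v.1 - 2*u.2.1*v.2.1 - u.2.1*v.2.2.1 - u.2.2.1*v.2.1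
  - 4*u.2.2.1*v.2.2.1 - 2*u.2.2.1*v.2.2.2 - 2*u.2.2.2*v.2.2.1 - 4*u.2.2.2*v.2.2.2
  + u.1*v.2.2.2 + u.2.2.2*v.1

/-- The six vectors of norm `-2`. -/
def V2f : Finset T4 :=
  {(-1,0,0,0), (-1,1,0,0), (0,-1,0,0), (0,1,0,0), (1,-1,0,0), (1,0,0,0)}

/-- The eighteen vectors of norm `-4`. -/
def V4f : Finset T4 :=
  {(-1,0,0,-1), (-1,0,1,-1), (-1,1,-1,0), (-1,1,0,-1), (0,-1,1,-1), (0,-1,1,0),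
   (0,0,-1,0), (0,0,-1,1), (0,0,0,-1), (0,0,0,1), (0,0,1,-1), (0,0,1,0),
   (0,1,-1,0), (0,1,-1,1), (1,-1,0,1), (1,-1,1,0), (1,0,-1,1), (1,0,0,1)}

def T12 : Finset (T4 × T4) := (V2f ×ˢ V2f).filter (fun p => B p.1 p.2 = -1)

def T123 : Finset ((T4 × T4) × T4) :=
  (T12 ×ˢ V4f).filter (fun p => B p.1.1 p.2 = 0 ∧ B p.1.2 p.2 = -1)

def T : Finset (((T4 × T4) × T4) × T4) :=
  (T123 ×ˢ V4f).filter (fun p => B p.1.1.1 p.2 = 1 ∧ B p.1.1.2 p.2 = 0 ∧ B p.1.2 p.2 = -2)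

def mat (p : ((T4 × T4) × T4) × T4) : Matrix (Fin 4) (Fin 4) ℤ :=
  !![p.1.1.1.1, p.1.1.1.2.1, p.1.1.1.2.2.1, p.1.1.1.2.2.2;
     p.1.1.2.1, p.1.1.2.2.1, p.1.1.2.2.2.1, p.1.1.2.2.2.2;
     p.1.2.1, p.1.2.2.1, p.1.2.2.2.1, p.1.2.2.2.2;
     p.2.1, p.2.2.1, p.2.2.2.1, p.2.2.2.2]

def rowsOf (U : Matrix (Fin 4) (Fin 4) ℤ) : ((T4 × T4) × T4) × T4 :=
  ((((U 0 0, U 0 1, U 0 2, U 0 3), (U 1 0, U 1 1, U 1 2, U 1 3)),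
    (U 2 0, U 2 1, U 2 2, U 2 3)), (U 3 0, U 3 1, U 3 2, U 3 3))

lemma bounds (a b c d q : ℤ) (hq4 : q ≤ 4)
    (hq : 2*a^2 + 2*b^2 + 4*c^2 + 4*d^2 + 2*a*b + 2*b*c + 4*c*d - 2*a*d = q) :
    (-1 ≤ a ∧ a ≤ 1) ∧ (-1 ≤ b ∧ b ≤ 1) ∧ (-1 ≤ c ∧ c ≤ 1) ∧ (-1 ≤ d ∧ d ≤ 1) := by
  have hA : 5*a^2 ≤ 16 := by
    nlinarith [sq_nonneg (3*a+4*b-4*d), sq_nonneg (2*b+3*c+4*d), sq_nonneg c]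
  have hB : 5*b^2 ≤ 16 := by
    nlinarith [sq_nonneg (2*a+b-d), sq_nonneg (b+4*c+2*d), sq_nonneg d]
  have hC : 5*c^2 ≤ 8 := by
    nlinarith [sq_nonneg (2*a+b-d), sq_nonneg (3*b+2*c+d), sq_nonneg (c+2*d)]
  have hD : 5*d^2 ≤ 8 := by
    nlinarith [sq_nonneg (2*a+b-d), sq_nonneg (3*b+2*c+d), sq_nonneg (2*c+d)]
  refine ⟨⟨?_, ?_⟩, ⟨?_, ?_⟩, ⟨?_, ?_⟩, ⟨?_, ?_⟩⟩ <;>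
    · by_contra hc'
      push_neg at hc'
      nlinarith [hA, hB, hC, hD, hc']

lemma mem_V2 (a b c d : ℤ)
    (hq : 2*a^2 + 2*b^2 + 4*c^2 + 4*d^2 + 2*a*b + 2*b*c + 4*c*d - 2*a*d = 2) :
    (a,b,c,d) ∈ V2f := by
  obtain ⟨⟨ha1,ha2⟩,⟨hb1,hb2⟩,⟨hc1,hc2⟩,⟨hd1,hd2⟩⟩ := bounds a b c d 2 (by norm_num) hq
  interval_cases a <;> interval_cases b <;> interval_cases c <;> interval_cases d <;>
    revert hq <;> decide

lemma mem_V4 (a b c d : ℤ)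
    (hq : 2*a^2 + 2*b^2 + 4*c^2 + 4*d^2 + 2*a*b + 2*b*c + 4*c*d - 2*a*d = 4) :
    (a,b,c,d) ∈ V4f := by
  obtain ⟨⟨ha1,ha2⟩,⟨hb1,hb2⟩,⟨hc1,hc2⟩,⟨hd1,hd2⟩⟩ := bounds a b c d 4 le_rfl hq
  interval_cases a <;> interval_cases b <;> interval_cases c <;> interval_cases d <;>
    revert hq <;> decide

lemma B_self_V2 : ∀ v ∈ V2f, B v v = -2 := by decide
lemma B_self_V4 : ∀ v ∈ V4f, B v v = -4 := by decide

lemma key (U : Matrix (Fin 4) (Fin 4) ℤ) (h : U * M * Uᵀ = M) : rowsOf U ∈ T := by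
  have h00 := congrFun (congrFun h 0) 0
  have h01 := congrFun (congrFun h 0) 1
  have h02 := congrFun (congrFun h 0) 2
  have h03 := congrFun (congrFun h 0) 3
  have h11 := congrFun (congrFun h 1) 1
  have h12 := congrFun (congrFun h 1) 2
  have h13 := congrFun (congrFun h 1) 3
  have h22 := congrFun (congrFun h 2) 2
  have h23 := congrFun (congrFun h 2) 3
  have h33 := congrFun (congrFun h 3) 3
  simp only [Matrix.mul_apply, M, Fin.sum_univ_four, Matrix.transpose_apply,
    Matrix.cons_val', Matrix.cons_val_zero, Matrix.cons_val_one, Matrix.head_cons,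
    Matrix.empty_val', Matrix.cons_val_fin_one, Matrix.head_fin_const,
    Matrix.cons_val_two, Matrix.tail_cons, Matrix.cons_val_three,
    Matrix.of_apply] at h00 h01 h02 h03 h11 h12 h13 h22 h23 h33
  refine Finset.mem_filter.mpr ⟨Finset.mem_product.mpr ⟨Finset.mem_filter.mpr
    ⟨Finset.mem_product.mpr ⟨Finset.mem_filter.mpr ⟨Finset.mem_product.mpr ⟨?_, ?_⟩, ?_⟩, ?_⟩,
      ⟨?_, ?_⟩⟩, ?_⟩, ⟨?_, ?_, ?_⟩⟩
  · exact mem_V2 _ _ _ _ (by linear_combination -h00)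
  · exact mem_V2 _ _ _ _ (by linear_combination -h11)
  · show B _ _ = -1
    simp only [B, rowsOf]
    linear_combination h01
  · exact mem_V4 _ _ _ _ (by linear_combination -h22)
  · show B _ _ = 0
    simp only [B, rowsOf]
    linear_combination h02
  · show B _ _ = -1
    simp only [B, rowsOf]
    linear_combination h12
  · exact mem_V4 _ _ _ _ (by linear_combination -h33)
  · show B _ _ = 1
    simp only [B, rowsOf]
    linear_combination h03
  · show B _ _ = 0
    simp only [B, rowsOf]
    linear_combination h13
  · show B _ _ = -2
    simp only [B, rowsOf]
    linear_combination h23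

set_option maxHeartbeats 2000000 in
set_option maxHeartbeats 1000000 in
lemma key2aux (a1 a2 a3 a4 b1 b2 b3 b4 c1 c2 c3 c4 d1 d2 d3 d4 : ℤ)
    (hb00 : -2*a1*a1 - a1*a2 - a2*a1 - 2*a2*a2 - a2*a3 - a3*a2 - 4*a3*a3 - 2*a3*a4 - 2*a4*a3 - 4*a4*a4 + a1*a4 + a4*a1 = -2)
    (hb11 : -2*b1*b1 - b1*b2 - b2*b1 - 2*b2*b2 - b2*b3 - b3*b2 - 4*b3*b3 - 2*b3*b4 - 2*b4*b3 - 4*b4*b4 + b1*b4 + b4*b1 = -2)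
    (hb22 : -2*c1*c1 - c1*c2 - c2*c1 - 2*c2*c2 - c2*c3 - c3*c2 - 4*c3*c3 - 2*c3*c4 - 2*c4*c3 - 4*c4*c4 + c1*c4 + c4*c1 = -4)
    (hb33 : -2*d1*d1 - d1*d2 - d2*d1 - 2*d2*d2 - d2*d3 - d3*d2 - 4*d3*d3 - 2*d3*d4 - 2*d4*d3 - 4*d4*d4 + d1*d4 + d4*d1 = -4)
    (hb01 : -2*a1*b1 - a1*b2 - a2*b1 - 2*a2*b2 - a2*b3 - a3*b2 - 4*a3*b3 - 2*a3*b4 - 2*a4*b3 - 4*a4*b4 + a1*b4 + a4*b1 = -1)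
    (hb02 : -2*a1*c1 - a1*c2 - a2*c1 - 2*a2*c2 - a2*c3 - a3*c2 - 4*a3*c3 - 2*a3*c4 - 2*a4*c3 - 4*a4*c4 + a1*c4 + a4*c1 = 0)
    (hb03 : -2*a1*d1 - a1*d2 - a2*d1 - 2*a2*d2 - a2*d3 - a3*d2 - 4*a3*d3 - 2*a3*d4 - 2*a4*d3 - 4*a4*d4 + a1*d4 + a4*d1 = 1)
    (hb12 : -2*b1*c1 - b1*c2 - b2*c1 - 2*b2*c2 - b2*c3 - b3*c2 - 4*b3*c3 - 2*b3*c4 - 2*b4*c3 - 4*b4*c4 + b1*c4 + b4*c1 = -1)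
    (hb13 : -2*b1*d1 - b1*d2 - b2*d1 - 2*b2*d2 - b2*d3 - b3*d2 - 4*b3*d3 - 2*b3*d4 - 2*b4*d3 - 4*b4*d4 + b1*d4 + b4*d1 = 0)
    (hb23 : -2*c1*d1 - c1*d2 - c2*d1 - 2*c2*d2 - c2*d3 - c3*d2 - 4*c3*d3 - 2*c3*d4 - 2*c4*d3 - 4*c4*d4 + c1*d4 + c4*d1 = -2) :
    !![a1,a2,a3,a4; b1,b2,b3,b4; c1,c2,c3,c4; d1,d2,d3,d4] * M *
      (!![a1,a2,a3,a4; b1,b2,b3,b4; c1,c2,c3,c4; d1,d2,d3,d4])ᵀ = M := by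
  set A := !![a1,a2,a3,a4; b1,b2,b3,b4; c1,c2,c3,c4; d1,d2,d3,d4] with hA
  have hT : Aᵀ = !![a1,b1,c1,d1; a2,b2,c2,d2; a3,b3,c3,d3; a4,b4,c4,d4] := by
    ext i j; fin_cases i <;> fin_cases j <;> rfl
  rw [hT]
  set B := !![a1,b1,c1,d1; a2,b2,c2,d2; a3,b3,c3,d3; a4,b4,c4,d4] with hB
  have e : ∀ i j : Fin 4, (A * M * B) i j = M i j := by
    have e00 : (A * M * B) 0 0 = M 0 0 := by
      simp [hA, hB, Matrix.mul_apply, M, Fin.sum_univ_four]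
      linear_combination hb00
    have e01 : (A * M * B) 0 1 = M 0 1 := by
      simp [hA, hB, Matrix.mul_apply, M, Fin.sum_univ_four]
      linear_combination hb01
    have e02 : (A * M * B) 0 2 = M 0 2 := by
      simp [hA, hB, Matrix.mul_apply, M, Fin.sum_univ_four]
      linear_combination hb02
    have e03 : (A * M * B) 0 3 = M 0 3 := by
      simp [hA, hB, Matrix.mul_apply, M, Fin.sum_univ_four]
      linear_combination hb03
    have e10 : (A * M * B) 1 0 = M 1 0 := by
      simp [hA, hB, Matrix.mul_apply, M, Fin.sum_univ_four]
      linear_combination hb01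
    have e11 : (A * M * B) 1 1 = M 1 1 := by
      simp [hA, hB, Matrix.mul_apply, M, Fin.sum_univ_four]
      linear_combination hb11
    have e12 : (A * M * B) 1 2 = M 1 2 := by
      simp [hA, hB, Matrix.mul_apply, M, Fin.sum_univ_four]
      linear_combination hb12
    have e13 : (A * M * B) 1 3 = M 1 3 := by
      simp [hA, hB, Matrix.mul_apply, M, Fin.sum_univ_four]
      linear_combination hb13
    have e20 : (A * M * B) 2 0 = M 2 0 := by
      simp [hA, hB, Matrix.mul_apply, M, Fin.sum_univ_four]
      linear_combination hb02
    have e21 : (A * M * B) 2 1 = M 2 1 := by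
      simp [hA, hB, Matrix.mul_apply, M, Fin.sum_univ_four]
      linear_combination hb12
    have e22 : (A * M * B) 2 2 = M 2 2 := by
      simp [hA, hB, Matrix.mul_apply, M, Fin.sum_univ_four]
      linear_combination hb22
    have e23 : (A * M * B) 2 3 = M 2 3 := by
      simp [hA, hB, Matrix.mul_apply, M, Fin.sum_univ_four]
      linear_combination hb23
    have e30 : (A * M * B) 3 0 = M 3 0 := by
      simp [hA, hB, Matrix.mul_apply, M, Fin.sum_univ_four]
      linear_combination hb03
    have e31 : (A * M * B) 3 1 = M 3 1 := by
      simp [hA, hB, Matrix.mul_apply, M, Fin.sum_univ_four]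
      linear_combination hb13
    have e32 : (A * M * B) 3 2 = M 3 2 := by
      simp [hA, hB, Matrix.mul_apply, M, Fin.sum_univ_four]
      linear_combination hb23
    have e33 : (A * M * B) 3 3 = M 3 3 := by
      simp [hA, hB, Matrix.mul_apply, M, Fin.sum_univ_four]
      linear_combination hb33
    intro i j
    fin_cases i <;> fin_cases j
    exacts [e00, e01, e02, e03, e10, e11, e12, e13, e20, e21, e22, e23, e30, e31, e32, e33]
  exact Matrix.ext e

lemma key2 (p : ((T4 × T4) × T4) × T4) (hp : p ∈ T) : mat p * M * (mat p)ᵀ = M := by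
  obtain ⟨hp1, hb03, hb13, hb23⟩ := Finset.mem_filter.mp hp
  obtain ⟨hp2, hr3⟩ := Finset.mem_product.mp hp1
  obtain ⟨hp3, hb02, hb12⟩ := Finset.mem_filter.mp hp2
  obtain ⟨hp4, hr2⟩ := Finset.mem_product.mp hp3
  obtain ⟨hp5, hb01⟩ := Finset.mem_filter.mp hp4
  obtain ⟨hr0, hr1⟩ := Finset.mem_product.mp hp5
  have hb00 := B_self_V2 _ hr0
  have hb11 := B_self_V2 _ hr1
  have hb22 := B_self_V4 _ hr2
  have hb33 := B_self_V4 _ hr3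
  obtain ⟨⟨⟨⟨a1,a2,a3,a4⟩,⟨b1,b2,b3,b4⟩⟩,⟨c1,c2,c3,c4⟩⟩,⟨d1,d2,d3,d4⟩⟩ := p
  simp only [B] at hb00 hb01 hb02 hb03 hb11 hb12 hb13 hb22 hb23 hb33
  exact key2aux a1 a2 a3 a4 b1 b2 b3 b4 c1 c2 c3 c4 d1 d2 d3 d4
    hb00 hb11 hb22 hb33 hb01 hb02 hb03 hb12 hb13 hb23

def myEquiv : {U : Matrix (Fin 4) (Fin 4) ℤ // U * M * Uᵀ = M} ≃ {p // p ∈ T} where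
  toFun U := ⟨rowsOf U.1, key U.1 U.2⟩
  invFun p := ⟨mat p.1, key2 p.1 p.2⟩
  left_inv U := by
    apply Subtype.ext
    ext i j
    fin_cases i <;> fin_cases j <;> rfl
  right_inv p := by
    apply Subtype.ext
    obtain ⟨⟨⟨⟨⟨a1,a2,a3,a4⟩,⟨b1,b2,b3,b4⟩⟩,⟨c1,c2,c3,c4⟩⟩,⟨d1,d2,d3,d4⟩⟩, hp⟩ := p
    rfl

set_option maxRecDepth 100000 in
set_option maxHeartbeats 2000000 in
lemma Tcard : T.card = 72 := by decide


theorem card_orthogonal_group_of_R :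
    Nat.card {U : Matrix (Fin 4) (Fin 4) ℤ // U * M * Uᵀ = M} = 72 := by
  rw [Nat.card_congr myEquiv]
  simp [Nat.card_eq_fintype_card, Fintype.card_coe, Tcard]
end
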